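/- The function α(x) = h(x) + (1-x)·H_{n-1}^max is non-increasing for x ≥ f_{n-1}/f_{n+1}, where h is the binary entropy function and H_{n-1}^max = log₂ f_n - (1/f_n) sum_{i=1}^{n-2} f_i log₂ f_i. -/
import Mathlib


open Finset

/-- Binary entropy function (base 2). -/
noncomputable def binEnt (x : ℝ) : ℝ :=
  -x * Real.logb 2 x - (1 - x) * Real.logb 2 (1 - x)

/-- `H_{n-1}^max = log₂ f n - (1 / f n) ∑_{i=1}^{n-2} f i log₂ (f i)`. -/
noncomputable def HmaxPred (n : ℕ) : ℝ :=
  Real.logb 2 (Nat.fib n : ℝ) -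
    (1 / (Nat.fib n : ℝ)) *
      ∑ i ∈ Finset.Icc 1 (n - 2), (Nat.fib i : ℝ) * Real.logb 2 (Nat.fib i : ℝ)

lemma binEnt_eq (x : ℝ) :
    binEnt x = (-(x * Real.log x)) / Real.log 2
      - ((1 - x) * Real.log (1 - x)) / Real.log 2 := by
  simp only [binEnt, Real.logb]
  ring

lemma continuous_binEnt : Continuous binEnt := by
  have h : binEnt = fun x : ℝ => (-(x * Real.log x)) / Real.log 2
      - ((1 - x) * Real.log (1 - x)) / Real.log 2 := funext binEnt_eq
  rw [h]
  have c1 : Continuous fun x : ℝ => (1 - x) * Real.log (1 - x) :=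
    Real.continuous_mul_log.comp (continuous_const.sub continuous_id)
  exact ((Real.continuous_mul_log.neg).div_const _).sub (c1.div_const _)

lemma hasDerivAt_alpha (C : ℝ) {x : ℝ} (hx0 : 0 < x) (hx1 : x < 1) :
    HasDerivAt (fun x : ℝ => binEnt x + (1 - x) * C)
      (Real.logb 2 (1 - x) - Real.logb 2 x - C) x := by
  have h1 : HasDerivAt (fun y : ℝ => y * Real.log y) (Real.log x + 1) x :=
    Real.hasDerivAt_mul_log hx0.ne'
  have hin : HasDerivAt (fun y : ℝ => 1 - y) (-1) x := by
    simpa using (hasDerivAt_id x).const_sub 1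
  have h2 : HasDerivAt (fun y : ℝ => (1 - y) * Real.log (1 - y))
      ((Real.log (1 - x) + 1) * (-1)) x :=
    (Real.hasDerivAt_mul_log (by linarith)).comp x hin
  have h3 : HasDerivAt (fun y : ℝ => (1 - y) * C) ((-1) * C) x := hin.mul_const C
  have h : HasDerivAt (fun y : ℝ => (-(y * Real.log y)) / Real.log 2
      - ((1 - y) * Real.log (1 - y)) / Real.log 2 + (1 - y) * C)
      ((-(Real.log x + 1)) / Real.log 2
        - ((Real.log (1 - x) + 1) * (-1)) / Real.log 2 + (-1) * C) x :=
    ((h1.neg.div_const _).sub (h2.div_const _)).add h3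
  have heq : (fun y : ℝ => (-(y * Real.log y)) / Real.log 2
      - ((1 - y) * Real.log (1 - y)) / Real.log 2 + (1 - y) * C)
      = fun y : ℝ => binEnt y + (1 - y) * C := by
    funext y; rw [binEnt_eq]
  rw [heq] at h
  convert h using 1
  simp only [Real.logb]
  ring

lemma fibSumLe (m : ℕ) : ∑ i ∈ Finset.Icc 1 (m + 2), Nat.fib i ≤ Nat.fib (4 + m) := by
  induction m with
  | zero => decide
  | succ k ih =>
      rw [show k + 1 + 2 = (k + 2) + 1 from rfl, Finset.sum_Icc_succ_top (by omega)]
      have h : Nat.fib (4 + (k + 1)) = Nat.fib (4 + k) + Nat.fib (3 + k) := by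
        rw [show 4 + (k + 1) = (3 + k) + 2 by omega, Nat.fib_add_two,
          show 3 + k + 1 = 4 + k by omega]
        omega
      have h2 : Nat.fib (k + 2 + 1) ≤ Nat.fib (3 + k) := Nat.fib_mono (by omega)
      omega

/-- The function `α(x) = h(x) + (1 - x) H_{n-1}^max` is non-increasing for
`x ≥ f (n-1) / f (n+1)` (on `[f (n-1) / f (n+1), 1]`). -/
theorem alpha_antitoneOn (n : ℕ) (hn : 4 ≤ n) :
    AntitoneOn (fun x : ℝ => binEnt x + (1 - x) * HmaxPred n)
      (Set.Icc ((Nat.fib (n - 1) : ℝ) / (Nat.fib (n + 1) : ℝ)) 1) := by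
  obtain ⟨m, rfl⟩ := Nat.exists_eq_add_of_le hn
  set n := 4 + m with hn_def
  have hn1 : n - 1 = m + 3 := by omega
  have hn2 : n - 2 = m + 2 := by omega
  have hfib1_pos : 0 < (Nat.fib (n - 1) : ℝ) := by
    have : 0 < Nat.fib (n - 1) := Nat.fib_pos.mpr (by omega)
    exact_mod_cast this
  have hfibn_pos : 0 < (Nat.fib n : ℝ) := by
    have : 0 < Nat.fib n := Nat.fib_pos.mpr (by omega)
    exact_mod_cast this
  have hfibp_pos : 0 < (Nat.fib (n + 1) : ℝ) := by
    have : 0 < Nat.fib (n + 1) := Nat.fib_pos.mpr (by omega)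
    exact_mod_cast this
  have hfib_add : (Nat.fib (n + 1) : ℝ) = Nat.fib (n - 1) + Nat.fib n := by
    have h : n + 1 = (n - 1) + 2 := by omega
    rw [h, Nat.fib_add_two, show n - 1 + 1 = n by omega]
    push_cast
    ring
  set a : ℝ := (Nat.fib (n - 1) : ℝ) / (Nat.fib (n + 1) : ℝ) with ha_def
  have ha_pos : 0 < a := div_pos hfib1_pos hfibp_pos
  have ha_lt : a < 1 := by
    rw [div_lt_one hfibp_pos, hfib_add]
    linarith
  -- key inequality: S ≤ fib n * logb 2 (fib (n-1))
  have hfib1_ge1 : (1 : ℝ) ≤ (Nat.fib (n - 1) : ℝ) := by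
    have : 1 ≤ Nat.fib (n - 1) := Nat.fib_pos.mpr (by omega)
    exact_mod_cast this
  have hlogb1_nonneg : 0 ≤ Real.logb 2 (Nat.fib (n - 1) : ℝ) :=
    Real.logb_nonneg one_lt_two hfib1_ge1
  have hkey : ∑ i ∈ Finset.Icc 1 (n - 2), (Nat.fib i : ℝ) * Real.logb 2 (Nat.fib i : ℝ)
      ≤ (Nat.fib n : ℝ) * Real.logb 2 (Nat.fib (n - 1) : ℝ) := by
    have hterm : ∀ i ∈ Finset.Icc 1 (n - 2),
        (Nat.fib i : ℝ) * Real.logb 2 (Nat.fib i : ℝ)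
          ≤ (Nat.fib i : ℝ) * Real.logb 2 (Nat.fib (n - 1) : ℝ) := by
      intro i hi
      simp only [Finset.mem_Icc] at hi
      have hfi_pos : 0 < Nat.fib i := Nat.fib_pos.mpr (by omega)
      have hle : Nat.fib i ≤ Nat.fib (n - 1) := Nat.fib_mono (by omega)
      refine mul_le_mul_of_nonneg_left ?_ (by positivity)
      exact Real.logb_le_logb_of_le one_lt_two (by exact_mod_cast hfi_pos)
        (by exact_mod_cast hle)
    calc ∑ i ∈ Finset.Icc 1 (n - 2), (Nat.fib i : ℝ) * Real.logb 2 (Nat.fib i : ℝ)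
        ≤ ∑ i ∈ Finset.Icc 1 (n - 2), (Nat.fib i : ℝ) * Real.logb 2 (Nat.fib (n - 1) : ℝ) :=
          Finset.sum_le_sum hterm
      _ = (∑ i ∈ Finset.Icc 1 (n - 2), (Nat.fib i : ℝ)) * Real.logb 2 (Nat.fib (n - 1) : ℝ) :=
          (Finset.sum_mul _ _ _).symm
      _ ≤ (Nat.fib n : ℝ) * Real.logb 2 (Nat.fib (n - 1) : ℝ) := by
          refine mul_le_mul_of_nonneg_right ?_ hlogb1_nonneg
          have hsum : ∑ i ∈ Finset.Icc 1 (n - 2), Nat.fib i ≤ Nat.fib n := by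
            rw [hn2, hn_def]
            exact fibSumLe m
          calc (∑ i ∈ Finset.Icc 1 (n - 2), (Nat.fib i : ℝ))
              = ((∑ i ∈ Finset.Icc 1 (n - 2), Nat.fib i : ℕ) : ℝ) := by push_cast; rfl
            _ ≤ (Nat.fib n : ℝ) := by exact_mod_cast hsum
  -- consequence: logb 2 (fib n) - logb 2 (fib (n-1)) ≤ HmaxPred n
  have hHmax : Real.logb 2 (Nat.fib n : ℝ) - Real.logb 2 (Nat.fib (n - 1) : ℝ)
      ≤ HmaxPred n := by
    unfold HmaxPred
    rw [sub_le_sub_iff_left, one_div, inv_mul_le_iff₀ hfibn_pos]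
    exact hkey
  -- now the main argument
  apply antitoneOn_of_deriv_nonpos (convex_Icc a 1)
  · exact (continuous_binEnt.add ((continuous_const.sub continuous_id).mul
      continuous_const)).continuousOn
  · rw [interior_Icc]
    intro x hx
    exact ((hasDerivAt_alpha (HmaxPred n) (lt_trans ha_pos hx.1)
      hx.2).differentiableAt).differentiableWithinAt
  · rw [interior_Icc]
    intro x hx
    have hx0 : 0 < x := lt_trans ha_pos hx.1
    have hx1 : x < 1 := hx.2
    rw [(hasDerivAt_alpha (HmaxPred n) hx0 hx1).deriv]
    rw [sub_nonpos]
    have h1 : Real.logb 2 (1 - x) ≤ Real.logb 2 (1 - a) :=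
      Real.logb_le_logb_of_le one_lt_two (by linarith) (by linarith [hx.1])
    have h2 : Real.logb 2 a ≤ Real.logb 2 x :=
      Real.logb_le_logb_of_le one_lt_two ha_pos hx.1.le
    have h3 : Real.logb 2 (1 - a) - Real.logb 2 a
        = Real.logb 2 (Nat.fib n : ℝ) - Real.logb 2 (Nat.fib (n - 1) : ℝ) := by
      have h1a : 1 - a = (Nat.fib n : ℝ) / (Nat.fib (n + 1) : ℝ) := by
        rw [ha_def]
        field_simp
        linarith [hfib_add]
      rw [h1a, ha_def, Real.logb_div hfibn_pos.ne' hfibp_pos.ne',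
        Real.logb_div hfib1_pos.ne' hfibp_pos.ne']
      ring
    have := h3 ▸ (sub_le_sub h1 h2)
    linarith [hHmax]
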